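/- In the Acc-DNGD-SC setup with 0 < η < 1/μ (so that α = √(μη) ∈ (0,1)), define f̂(t) = (1/n)Σ_i [ f_i(y_i(t)) + ⟨∇f_i(y_i(t)), ȳ(t) − y_i(t)⟩ ], and define functions Φ_t : ℝ^N → ℝ by Φ₀(ω) = f(x̄(0)) + (μ/2)‖ω − v̄(0)‖² and Φ_{t+1}(ω) = (1−α)Φ_t(ω) + α( f̂(t) + ⟨g(t), ω − ȳ(t)⟩ + (μ/2)‖ω − ȳ(t)‖² ). Then: (a) Φ_t(ω) = φ_t* + (μ/2)‖ω − v̄(t)‖² for all ω and t, where φ₀* = f(x̄(0)) and φ_{t+1}* = (1−α)φ_t* + (μ/2)(1−α)α‖v̄(t) − ȳ(t)‖² + α f̂(t) − (η/2)‖g(t)‖² + (1−α)α⟨g(t), v̄(t) − ȳ(t)⟩; and (b) for every ω and t, Φ_t(ω) ≤ f(ω) + (1−α)^t (Φ₀(ω) − f(ω)). -/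

import Mathlib

open scoped RealInnerProductSpace

/-- Coercion of a plain vector into Euclidean space (so that ‖·‖ is the 2-norm). -/
def toE {n : ℕ} (v : Fin n → ℝ) : EuclideanSpace ℝ (Fin n) := WithLp.toLp 2 v

lemma quad_id {V : Type*} [NormedAddCommGroup V] [InnerProductSpace ℝ V]
    (μ α η : ℝ) (hμ : μ ≠ 0) (hα0 : α ≠ 0) (hαμη : α ^ 2 = μ * η)
    (ω v y g : V) :
    (1 - α) * (μ / 2 * ‖ω - v‖ ^ 2) + α * (⟪g, ω - y⟫ + μ / 2 * ‖ω - y‖ ^ 2)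
      = μ / 2 * (1 - α) * α * ‖v - y‖ ^ 2 - η / 2 * ‖g‖ ^ 2 + (1 - α) * α * ⟪g, v - y⟫
        + μ / 2 * ‖ω - ((1 - α) • v + α • y - (η / α) • g)‖ ^ 2 := by
  have hη : η = α ^ 2 / μ := by field_simp [hαμη]; linear_combination -hαμη
  subst hη
  simp only [← real_inner_self_eq_norm_sq, inner_sub_left, inner_sub_right,
    inner_add_left, inner_add_right, real_inner_smul_left, real_inner_smul_right]
  rw [real_inner_comm v ω, real_inner_comm y ω, real_inner_comm g ω,
    real_inner_comm y v, real_inner_comm g v, real_inner_comm g y]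
  field_simp
  ring


/-- properties of the estimate functions Φ_t of Acc-DNGD-SC:
(a) Φ_t(ω) = φ_t* + (μ/2)‖ω − v̄(t)‖² with φ_t* given by the stated recursion, and
(b) Φ_t(ω) ≤ f(ω) + (1−α)^t (Φ₀(ω) − f(ω)). -/
theorem stmt_5 (n N : ℕ) (hn : 0 < n)
    (f : Fin n → EuclideanSpace ℝ (Fin N) → ℝ)
    (μ L : ℝ) (hμ : 0 < μ) (hμL : μ ≤ L)
    (hdiff : ∀ i, Differentiable ℝ (f i))
    (hsmooth : ∀ i u w, ‖gradient (f i) u - gradient (f i) w‖ ≤ L * ‖u - w‖)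
    (hsc : ∀ i u w, f i w ≥ f i u + ⟪gradient (f i) u, w - u⟫ + μ / 2 * ‖w - u‖ ^ 2)
    -- consensus matrix
    (W : Matrix (Fin n) (Fin n) ℝ)
    (hWnonneg : ∀ i j, 0 ≤ W i j)
    (hWrow : ∀ i, ∑ j, W i j = 1)
    (hWcol : ∀ j, ∑ i, W i j = 1)
    (σ : ℝ) (hσ0 : 0 < σ) (hσ1 : σ < 1)
    (havg : ∀ ω : EuclideanSpace ℝ (Fin n),
      ‖toE (fun i => ∑ j, W i j * ω j) - toE (fun _ => (n : ℝ)⁻¹ * ∑ j, ω j)‖ ≤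
        σ * ‖ω - toE (fun _ => (n : ℝ)⁻¹ * ∑ j, ω j)‖)
    -- step size; 0 < η < 1/μ so that α = √(μη) ∈ (0,1)
    (η : ℝ) (hη0 : 0 < η) (hη1 : η < 1 / μ)
    (α : ℝ) (hα : α = Real.sqrt (μ * η))
    -- the algorithm
    (x v y s : ℕ → Fin n → EuclideanSpace ℝ (Fin N))
    (hx0 : ∀ i, x 0 i = y 0 i)
    (hv0 : ∀ i, v 0 i = y 0 i)
    (hs0 : ∀ i, s 0 i = gradient (f i) (y 0 i))
    (hxup : ∀ t i, x (t + 1) i = (∑ j, W i j • y t j) - η • s t i)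
    (hvup : ∀ t i, v (t + 1) i =
      (1 - α) • (∑ j, W i j • v t j) + α • (∑ j, W i j • y t j) - (η / α) • s t i)
    (hyup : ∀ t i, y (t + 1) i = (1 + α)⁻¹ • (x (t + 1) i + α • v (t + 1) i))
    (hsup : ∀ t i, s (t + 1) i =
      (∑ j, W i j • s t j) + gradient (f i) (y (t + 1) i) - gradient (f i) (y t i))
    -- averages, average objective, inexact gradient and f̂
    (F : EuclideanSpace ℝ (Fin N) → ℝ) (hF : F = fun w => (n : ℝ)⁻¹ * ∑ i, f i w)
    (xbar vbar ybar g : ℕ → EuclideanSpace ℝ (Fin N))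
    (hxbar : ∀ t, xbar t = (n : ℝ)⁻¹ • ∑ i, x t i)
    (hvbar : ∀ t, vbar t = (n : ℝ)⁻¹ • ∑ i, v t i)
    (hybar : ∀ t, ybar t = (n : ℝ)⁻¹ • ∑ i, y t i)
    (hg : ∀ t, g t = (n : ℝ)⁻¹ • ∑ i, gradient (f i) (y t i))
    (fhat : ℕ → ℝ)
    (hfhat : ∀ t, fhat t =
      (n : ℝ)⁻¹ * ∑ i, (f i (y t i) + ⟪gradient (f i) (y t i), ybar t - y t i⟫))
    -- the estimate functions Φ_t
    (Φ : ℕ → EuclideanSpace ℝ (Fin N) → ℝ)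
    (hΦ0 : ∀ ω, Φ 0 ω = F (xbar 0) + μ / 2 * ‖ω - vbar 0‖ ^ 2)
    (hΦrec : ∀ t ω, Φ (t + 1) ω =
      (1 - α) * Φ t ω + α * (fhat t + ⟪g t, ω - ybar t⟫ + μ / 2 * ‖ω - ybar t‖ ^ 2))
    -- the sequence φ_t*
    (φs : ℕ → ℝ) (hφs0 : φs 0 = F (xbar 0))
    (hφsrec : ∀ t, φs (t + 1) =
      (1 - α) * φs t + μ / 2 * (1 - α) * α * ‖vbar t - ybar t‖ ^ 2 + α * fhat t
        - η / 2 * ‖g t‖ ^ 2 + (1 - α) * α * ⟪g t, vbar t - ybar t⟫) :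
    (∀ t ω, Φ t ω = φs t + μ / 2 * ‖ω - vbar t‖ ^ 2) ∧
    (∀ t ω, Φ t ω ≤ F ω + (1 - α) ^ t * (Φ 0 ω - F ω)) := by
  classical
  have hn' : (n : ℝ) ≠ 0 := Nat.cast_ne_zero.mpr hn.ne'
  have hμη : 0 < μ * η := mul_pos hμ hη0
  have hμη1 : μ * η < 1 := by
    have := (lt_div_iff₀ hμ).mp hη1
    nlinarith
  have hα0 : 0 < α := by rw [hα]; exact Real.sqrt_pos.mpr hμη
  have hα1 : α < 1 := by
    rw [hα]
    calc Real.sqrt (μ * η) < Real.sqrt 1 := Real.sqrt_lt_sqrt hμη.le hμη1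
    _ = 1 := Real.sqrt_one
  have hα2 : α ^ 2 = μ * η := by rw [hα]; exact Real.sq_sqrt hμη.le
  -- average of s equals g
  have hsbar : ∀ t, (n : ℝ)⁻¹ • ∑ i, s t i = g t := by
    intro t
    induction t with
    | zero =>
      rw [hg]; congr 1; exact Finset.sum_congr rfl fun i _ => hs0 i
    | succ t ih =>
      have hdW : ∑ i, ∑ j, W i j • s t j = ∑ j, s t j := by
        rw [Finset.sum_comm]
        refine Finset.sum_congr rfl fun j _ => ?_
        rw [← Finset.sum_smul, hWcol, one_smul]
      have hsum : ∑ i, s (t + 1) i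
          = (∑ j, s t j) + (∑ i, gradient (f i) (y (t + 1) i))
            - ∑ i, gradient (f i) (y t i) := by
        simp only [hsup, Finset.sum_sub_distrib, Finset.sum_add_distrib, hdW]
      rw [hsum, smul_sub, smul_add, ih, ← hg, ← hg]
      abel
  -- recursion for vbar
  have hvbarrec : ∀ t, vbar (t + 1)
      = (1 - α) • vbar t + α • ybar t - (η / α) • g t := by
    intro t
    have hdWv : ∑ i, ∑ j, W i j • v t j = ∑ j, v t j := by
      rw [Finset.sum_comm]
      refine Finset.sum_congr rfl fun j _ => ?_
      rw [← Finset.sum_smul, hWcol, one_smul]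
    have hdWy : ∑ i, ∑ j, W i j • y t j = ∑ j, y t j := by
      rw [Finset.sum_comm]
      refine Finset.sum_congr rfl fun j _ => ?_
      rw [← Finset.sum_smul, hWcol, one_smul]
    have hsum : ∑ i, v (t + 1) i
        = (1 - α) • (∑ j, v t j) + α • (∑ j, y t j) - (η / α) • ∑ i, s t i := by
      simp only [hvup, Finset.sum_sub_distrib, Finset.sum_add_distrib,
        ← Finset.smul_sum, hdWv, hdWy]
    rw [hvbar, hsum, smul_sub, smul_add, hvbar, hybar, ← hsbar t]
    rw [smul_comm ((n:ℝ)⁻¹) (1 - α), smul_comm ((n:ℝ)⁻¹) α, smul_comm ((n:ℝ)⁻¹) (η/α)]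
  -- Part (a)
  have parta : ∀ t ω, Φ t ω = φs t + μ / 2 * ‖ω - vbar t‖ ^ 2 := by
    intro t
    induction t with
    | zero => intro ω; rw [hΦ0, hφs0]
    | succ t ih =>
      intro ω
      have key := quad_id μ α η hμ.ne' hα0.ne' hα2 ω (vbar t) (ybar t) (g t)
      rw [hΦrec, ih, hφsrec, hvbarrec]
      linear_combination key
  refine ⟨parta, ?_⟩
  -- Part (b): claim Q ≤ F ω
  have hQ : ∀ t (ω : EuclideanSpace ℝ (Fin N)),
      fhat t + ⟪g t, ω - ybar t⟫ + μ / 2 * ‖ω - ybar t‖ ^ 2 ≤ F ω := by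
    intro t ω
    have h1 : fhat t + ⟪g t, ω - ybar t⟫
        = (n : ℝ)⁻¹ * ∑ i, (f i (y t i) + ⟪gradient (f i) (y t i), ω - y t i⟫) := by
      rw [hfhat, hg, real_inner_smul_left, sum_inner]
      rw [← mul_add, ← Finset.sum_add_distrib]
      congr 1
      refine Finset.sum_congr rfl fun i _ => ?_
      rw [add_assoc, ← inner_add_right]
      congr 2
      abel
    have h2 : ‖ω - ybar t‖ ^ 2 ≤ (n : ℝ)⁻¹ * ∑ i, ‖ω - y t i‖ ^ 2 := by
      have hz : ω - ybar t = (n : ℝ)⁻¹ • ∑ i, (ω - y t i) := by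
        rw [hybar, Finset.sum_sub_distrib, smul_sub, Finset.sum_const,
          Finset.card_univ, Fintype.card_fin, ← Nat.cast_smul_eq_nsmul ℝ, smul_smul,
          inv_mul_cancel₀ hn', one_smul]
      have hcs : (∑ i, ‖ω - y t i‖) ^ 2 ≤ (n : ℝ) * ∑ i, ‖ω - y t i‖ ^ 2 := by
        have h := sq_sum_le_card_mul_sum_sq
          (s := (Finset.univ : Finset (Fin n))) (f := fun i => ‖ω - y t i‖)
        simpa using h
      have hns : ‖ω - ybar t‖ ≤ (n : ℝ)⁻¹ * ∑ i, ‖ω - y t i‖ := by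
        rw [hz, norm_smul]
        simp only [norm_inv, Real.norm_natCast]
        gcongr
        exact norm_sum_le _ _
      have h0 : (0:ℝ) ≤ ∑ i, ‖ω - y t i‖ := Finset.sum_nonneg fun i _ => norm_nonneg _
      calc ‖ω - ybar t‖ ^ 2 ≤ ((n : ℝ)⁻¹ * ∑ i, ‖ω - y t i‖) ^ 2 :=
            pow_le_pow_left₀ (norm_nonneg _) hns 2
        _ = (n : ℝ)⁻¹ ^ 2 * (∑ i, ‖ω - y t i‖) ^ 2 := by ring
        _ ≤ (n : ℝ)⁻¹ ^ 2 * ((n : ℝ) * ∑ i, ‖ω - y t i‖ ^ 2) := by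
            gcongr
        _ = (n : ℝ)⁻¹ * ∑ i, ‖ω - y t i‖ ^ 2 := by
            field_simp
    have h3 : (n : ℝ)⁻¹ * ∑ i, (f i (y t i) + ⟪gradient (f i) (y t i), ω - y t i⟫
          + μ / 2 * ‖ω - y t i‖ ^ 2) ≤ F ω := by
      rw [hF]
      have hpos : (0:ℝ) ≤ (n : ℝ)⁻¹ := by positivity
      refine mul_le_mul_of_nonneg_left ?_ hpos
      exact Finset.sum_le_sum fun i _ => hsc i (y t i) ω
    have hrw : (n : ℝ)⁻¹ * ∑ i, (f i (y t i) + ⟪gradient (f i) (y t i), ω - y t i⟫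
          + μ / 2 * ‖ω - y t i‖ ^ 2)
        = (n : ℝ)⁻¹ * ∑ i, (f i (y t i) + ⟪gradient (f i) (y t i), ω - y t i⟫)
          + μ / 2 * ((n : ℝ)⁻¹ * ∑ i, ‖ω - y t i‖ ^ 2) := by
      rw [Finset.sum_add_distrib, ← Finset.mul_sum]
      ring
    rw [h1]
    have h4 := mul_le_mul_of_nonneg_left h2 (by positivity : (0:ℝ) ≤ μ / 2)
    linarith [h3, hrw]
  intro t
  induction t with
  | zero => intro ω; simp
  | succ t ih =>
    intro ω
    calc Φ (t + 1) ω
        = (1 - α) * Φ t ω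
          + α * (fhat t + ⟪g t, ω - ybar t⟫ + μ / 2 * ‖ω - ybar t‖ ^ 2) := hΦrec t ω
      _ ≤ (1 - α) * (F ω + (1 - α) ^ t * (Φ 0 ω - F ω)) + α * F ω := by
          have h1α : (0:ℝ) ≤ 1 - α := by linarith
          exact add_le_add (mul_le_mul_of_nonneg_left (ih ω) h1α)
            (mul_le_mul_of_nonneg_left (hQ t ω) hα0.le)
      _ = F ω + (1 - α) ^ (t + 1) * (Φ 0 ω - F ω) := by ring
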